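/- In the d-regular tree T_d, for every vertex x and every integer r ≥ 1, the ball B(x,r) = {y : dist(x,y) ≤ r} (graph distance) is a domain satisfying |∂B(x,r)| = d·(d−1)^{r−1} and (d−2)·|B(x,r)| + 2 = (d−1)·|∂B(x,r)|; consequently B(x,r) is isoperimetrically optimal. -/

import Mathlib

/-- Inner vertex boundary of a finite vertex set `D`: vertices of `D` having a neighbor
outside `D`. -/
noncomputable def innerBoundary {V : Type*} (G : SimpleGraph V) (D : Finset V) : Finset V := by
  classical exact D.filter (fun x => ∃ y, y ∉ D ∧ G.Adj x y)

/-- Outer vertex boundary of `D`: vertices outside `D` having a neighbor in `D`. -/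
def outerBoundary {V : Type*} (G : SimpleGraph V) (D : Finset V) : Set V :=
  {y | y ∉ D ∧ ∃ x ∈ D, G.Adj x y}

/-- Number of neighbors of `x` lying in `D`. -/
noncomputable def degIn {V : Type*} (G : SimpleGraph V) (D : Finset V) (x : V) : ℕ := by
  classical exact (D.filter (fun y => G.Adj x y)).card

/-- A domain: a finite nonempty vertex set whose induced subgraph is connected. -/
def IsGraphDomain {V : Type*} (G : SimpleGraph V) (D : Finset V) : Prop :=
  D.Nonempty ∧ (G.induce (↑D : Set V)).Connected

/-- `G` is a `d`-regular tree: connected, acyclic, and every vertex has degree `d`. -/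
def IsRegularTree {V : Type*} (G : SimpleGraph V) (d : ℕ) : Prop :=
  G.Connected ∧ G.IsAcyclic ∧ ∀ v : V, (G.neighborSet v).ncard = d

/-- Boundary branching excess `τ(D) = Σ_{x ∈ ∂D} (deg_D(x) − 1)`. -/
noncomputable def tauD {V : Type*} (G : SimpleGraph V) (D : Finset V) : ℕ :=
  ∑ x ∈ innerBoundary G D, (degIn G D x - 1)

/-- Residual boundary `R(D) = {x ∈ ∂D : deg_D(x) ≥ 2}`. -/
noncomputable def residualBoundary {V : Type*} (G : SimpleGraph V) (D : Finset V) : Finset V := by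
  classical exact (innerBoundary G D).filter (fun x => 2 ≤ degIn G D x)

/-- `D` is isoperimetrically optimal: its inner boundary is smallest among all domains
of the same cardinality. -/
def IsOptimal {V : Type*} (G : SimpleGraph V) (D : Finset V) : Prop :=
  ∀ D' : Finset V, IsGraphDomain G D' → D'.card = D.card →
    (innerBoundary G D).card ≤ (innerBoundary G D').card

open SimpleGraph Finset

lemma mem_innerBoundary_iff {V : Type*} (G : SimpleGraph V) (D : Finset V) (y : V) :
    y ∈ innerBoundary G D ↔ y ∈ D ∧ ∃ z, z ∉ D ∧ G.Adj y z := by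
  classical
  unfold innerBoundary
  rw [Finset.mem_filter]

lemma degIn_eq_card {V : Type*} {G : SimpleGraph V} {D : Finset V} {v : V} {s : Finset V}
    (hs : ∀ z, z ∈ s ↔ z ∈ D ∧ G.Adj v z) : degIn G D v = s.card := by
  classical
  unfold degIn
  congr 1
  ext z
  rw [Finset.mem_filter, hs]

section AuxTree
variable {V : Type*} {T : SimpleGraph V} {d : ℕ}

lemma dist_add_dist_le_of_mem_support {x y u : V} {p : T.Walk x y}
    (hp : p.length = T.dist x y) (hu : u ∈ p.support) :
    T.dist x u + T.dist u y ≤ T.dist x y := by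
  classical
  have h1 := SimpleGraph.dist_le (p.takeUntil u hu)
  have h2 := SimpleGraph.dist_le (p.dropUntil u hu)
  have h3 : (p.takeUntil u hu).length + (p.dropUntil u hu).length = p.length := by
    rw [← SimpleGraph.Walk.length_append, p.take_spec hu]
  omega

lemma dist_adj_le (hc : T.Connected) (x : V) {y z : V} (h : T.Adj y z) :
    T.dist x z ≤ T.dist x y + 1 := by
  obtain ⟨p, hp⟩ := hc.exists_walk_length_eq_dist x y
  have := SimpleGraph.dist_le (p.concat h)
  rwa [SimpleGraph.Walk.length_concat, hp] at this

lemma isPath_concat {x y z : V} {p : T.Walk x y} (hp : p.IsPath) (hz : z ∉ p.support)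
    (h : T.Adj y z) : (p.concat h).IsPath := by
  rw [← SimpleGraph.Walk.isPath_reverse_iff, SimpleGraph.Walk.reverse_concat,
    SimpleGraph.Walk.cons_isPath_iff]
  refine ⟨hp.reverse, ?_⟩
  simpa [SimpleGraph.Walk.support_reverse] using hz

lemma adj_dist_ne (hc : T.Connected) (hac : T.IsAcyclic) (x : V) {y z : V}
    (h : T.Adj y z) : T.dist x y ≠ T.dist x z := by
  intro he
  obtain ⟨p, hp, hpl⟩ := (hc x y).exists_path_of_dist
  have hzp : z ∉ p.support := by
    intro hz
    have h1 := dist_add_dist_le_of_mem_support hpl hz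
    have h2 : T.dist z y = 1 := SimpleGraph.dist_eq_one_iff_adj.2 h.symm
    omega
  obtain ⟨q, hq, hql⟩ := (hc x z).exists_path_of_dist
  have huniq := SimpleGraph.isAcyclic_iff_path_unique.1 hac ⟨q, hq⟩
    ⟨p.concat h, isPath_concat hp hzp h⟩
  have hlen := congrArg (fun P : T.Path x z => P.1.length) huniq
  simp only [SimpleGraph.Walk.length_concat] at hlen
  rw [hql, hpl] at hlen
  omega

lemma exists_parent (hc : T.Connected) (x : V) {y : V} (hy : T.dist x y ≠ 0) :
    ∃ z, T.Adj y z ∧ T.dist x z + 1 = T.dist x y := by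
  obtain ⟨p, hpl⟩ := hc.exists_walk_length_eq_dist x y
  have hne : y ≠ x := by
    rintro rfl
    rw [SimpleGraph.dist_self] at hy
    exact hy rfl
  obtain ⟨z, h, q, hq⟩ := SimpleGraph.Walk.exists_eq_cons_of_ne hne p.reverse
  have hql : q.length + 1 = T.dist x y := by
    have := congrArg SimpleGraph.Walk.length hq
    simp only [SimpleGraph.Walk.length_reverse, SimpleGraph.Walk.length_cons, hpl] at this
    omega
  have h1 : T.dist x z ≤ q.length := by
    have h := SimpleGraph.dist_le q
    have e : T.dist z x = T.dist x z := SimpleGraph.dist_comm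
    omega
  have h2 := dist_adj_le hc x h.symm
  exact ⟨z, h, by omega⟩

lemma parent_unique (hc : T.Connected) (hac : T.IsAcyclic) (x : V) {y z₁ z₂ : V}
    (h1 : T.Adj y z₁) (h2 : T.Adj y z₂)
    (k1 : T.dist x z₁ + 1 = T.dist x y) (k2 : T.dist x z₂ + 1 = T.dist x y) : z₁ = z₂ := by
  obtain ⟨q₁, hq₁, hl₁⟩ := (hc z₁ x).exists_path_of_dist
  obtain ⟨q₂, hq₂, hl₂⟩ := (hc z₂ x).exists_path_of_dist
  have key : ∀ (z : V) (q : T.Walk z x), q.length = T.dist z x →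
      T.dist x z + 1 = T.dist x y → y ∉ q.support := by
    intro z q hl hk hy
    have h1' := dist_add_dist_le_of_mem_support hl hy
    have e1 : T.dist z x = T.dist x z := SimpleGraph.dist_comm
    have e2 : T.dist y x = T.dist x y := SimpleGraph.dist_comm
    omega
  have hy1 := key z₁ q₁ hl₁ k1
  have hy2 := key z₂ q₂ hl₂ k2
  have P1 : (SimpleGraph.Walk.cons h1 q₁).IsPath :=
    (SimpleGraph.Walk.cons_isPath_iff _ _).2 ⟨hq₁, hy1⟩
  have P2 : (SimpleGraph.Walk.cons h2 q₂).IsPath :=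
    (SimpleGraph.Walk.cons_isPath_iff _ _).2 ⟨hq₂, hy2⟩
  have huniq := SimpleGraph.isAcyclic_iff_path_unique.1 hac
    ⟨SimpleGraph.Walk.cons h1 q₁, P1⟩ ⟨SimpleGraph.Walk.cons h2 q₂, P2⟩
  have := congrArg (fun P : T.Path y x => P.1.getVert 1) huniq
  simpa [SimpleGraph.Walk.getVert_cons] using this


lemma filter_parent_card (hc : T.Connected) (hac : T.IsAcyclic) (x : V) {y : V}
    (hy : T.dist x y ≠ 0) {N : Finset V} (hN : ∀ z, z ∈ N ↔ T.Adj y z) :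
    (N.filter (fun z => T.dist x z + 1 = T.dist x y)).card = 1 := by
  classical
  obtain ⟨z₀, hz₀, hz₀d⟩ := exists_parent hc x hy
  rw [Finset.card_eq_one]
  refine ⟨z₀, ?_⟩
  ext z
  simp only [Finset.mem_filter, hN, Finset.mem_singleton]
  constructor
  · rintro ⟨ha, hd'⟩
    exact parent_unique hc hac x ha hz₀ hd' hz₀d
  · rintro rfl
    exact ⟨hz₀, hz₀d⟩

lemma filter_child_card (hc : T.Connected) (hac : T.IsAcyclic) (x : V) {y : V}
    (hy : T.dist x y ≠ 0) {N : Finset V} (hN : ∀ z, z ∈ N ↔ T.Adj y z) (hNc : N.card = d) :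
    (N.filter (fun z => T.dist x z = T.dist x y + 1)).card = d - 1 := by
  classical
  have hsplit := Finset.card_filter_add_card_filter_not (s := N)
      (p := fun z => T.dist x z + 1 = T.dist x y)
  have h1 := filter_parent_card hc hac x hy hN
  have h2 : N.filter (fun z => ¬(T.dist x z + 1 = T.dist x y)) =
      N.filter (fun z => T.dist x z = T.dist x y + 1) := by
    apply Finset.filter_congr
    intro z hz
    have hadj := (hN z).1 hz
    have hne := adj_dist_ne hc hac x hadj
    have hle1 := dist_adj_le hc x hadj
    have hle2 := dist_adj_le hc x hadj.symm
    constructor <;> intro h' <;> omega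
  rw [h2] at hsplit
  omega

lemma sum_degIn_eq (hac : T.IsAcyclic) {D : Finset V} (hD : IsGraphDomain T D) :
    (∑ v ∈ D, degIn T D v) + 2 = 2 * D.card := by
  classical
  letI : Fintype (↑D : Set V) := FinsetCoe.fintype D
  letI : DecidableRel (T.induce (↑D : Set V)).Adj := Classical.decRel _
  have htree : (T.induce (↑D : Set V)).IsTree := by
    refine ⟨hD.2, fun v c hcyc => ?_⟩
    have hinj : Function.Injective (SimpleGraph.Embedding.induce (G := T) (↑D : Set V)).toHom :=
      (SimpleGraph.Embedding.induce (G := T) (↑D : Set V)).injective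
    exact hac _ (hcyc.map hinj)
  have hedge := htree.card_edgeFinset
  have hsum := SimpleGraph.sum_degrees_eq_twice_card_edges (T.induce (↑D : Set V))
  have hdeg' : ∀ v : (↑D : Set V), (T.induce (↑D : Set V)).degree v = degIn T D ↑v := by
    intro v
    have hs : ∀ z, z ∈ ((T.induce (↑D : Set V)).neighborFinset v).image Subtype.val ↔
        z ∈ D ∧ T.Adj ↑v z := by
      intro z
      simp only [Finset.mem_image, SimpleGraph.mem_neighborFinset]
      constructor
      · rintro ⟨w, hw, rfl⟩
        exact ⟨Finset.mem_coe.1 w.2, hw⟩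
      · rintro ⟨hz, ha⟩
        exact ⟨⟨z, Finset.mem_coe.2 hz⟩, ha, rfl⟩
    rw [degIn_eq_card hs, Finset.card_image_of_injective _ Subtype.val_injective]
    rfl
  have hcardD : Fintype.card (↑D : Set V) = D.card := by
    simp
  have hsum2 : ∑ v ∈ D, degIn T D v = ∑ v : (↑D : Set V), (T.induce (↑D : Set V)).degree v := by
    rw [Finset.sum_subtype D (fun x => Finset.mem_coe) (degIn T D)]
    exact (Finset.sum_congr rfl (fun v _ => hdeg' v)).symm
  rw [hsum2, hsum]
  rw [hcardD] at hedge
  omega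

lemma sum_split (hac : T.IsAcyclic) (hdeg : ∀ v, (T.neighborSet v).ncard = d) (hd : 2 ≤ d)
    {D : Finset V} (hD : IsGraphDomain T D) :
    (∑ v ∈ innerBoundary T D, degIn T D v) + d * (D.card - (innerBoundary T D).card) + 2
      = 2 * D.card ∧ (innerBoundary T D).card ≤ D.card := by
  classical
  have hsub : innerBoundary T D ⊆ D := fun y hy => ((mem_innerBoundary_iff T D y).1 hy).1
  have hfin : ∀ v, (T.neighborSet v).Finite := by
    intro v
    by_contra hf
    have h0 := Set.Infinite.ncard hf
    have := hdeg v
    omega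
  have hNv : ∀ v ∈ D, v ∉ innerBoundary T D → degIn T D v = d := by
    intro v hv hnb
    have hall : ∀ z, T.Adj v z → z ∈ D := by
      intro z hz
      by_contra hzD
      exact hnb ((mem_innerBoundary_iff T D v).2 ⟨hv, z, hzD, hz⟩)
    have heq : degIn T D v = ((hfin v).toFinset).card := by
      refine degIn_eq_card ?_
      intro z
      rw [Set.Finite.mem_toFinset, SimpleGraph.mem_neighborSet]
      exact ⟨fun ha => ⟨hall z ha, ha⟩, fun h => h.2⟩
    rw [heq, ← Set.ncard_eq_toFinset_card _ (hfin v), hdeg v]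
  have hsum := sum_degIn_eq hac hD
  rw [← Finset.sum_sdiff hsub] at hsum
  have hrest : ∑ v ∈ D \ innerBoundary T D, degIn T D v = (D.card - (innerBoundary T D).card) * d := by
    rw [Finset.sum_congr rfl (fun v hv => hNv v (Finset.mem_sdiff.1 hv).1 (Finset.mem_sdiff.1 hv).2),
      Finset.sum_const, smul_eq_mul, Finset.card_sdiff_of_subset hsub]
  refine ⟨?_, Finset.card_le_card hsub⟩
  rw [mul_comm, ← hrest]
  omega

lemma key_le (hac : T.IsAcyclic) (hdeg : ∀ v, (T.neighborSet v).ncard = d) (hd : 2 ≤ d)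
    {D : Finset V} (hD : IsGraphDomain T D) (hD2 : 2 ≤ D.card) :
    (d - 2) * D.card + 2 ≤ (d - 1) * (innerBoundary T D).card := by
  classical
  obtain ⟨hsum, hble⟩ := sum_split hac hdeg hd hD
  have hone : ∀ v ∈ innerBoundary T D, 1 ≤ degIn T D v := by
    intro v hv
    obtain ⟨hvD, -⟩ := (mem_innerBoundary_iff T D v).1 hv
    obtain ⟨w, hwD, hwv⟩ := Finset.exists_mem_ne hD2 v
    have hreach := hD.2.preconnected ⟨v, Finset.mem_coe.2 hvD⟩ ⟨w, Finset.mem_coe.2 hwD⟩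
    obtain ⟨p⟩ := hreach
    have hne : (⟨v, Finset.mem_coe.2 hvD⟩ : (↑D : Set V)) ≠ ⟨w, Finset.mem_coe.2 hwD⟩ := by
      simp [Subtype.ext_iff]
      exact fun h => hwv h.symm
    obtain ⟨u, ha, q, rfl⟩ := SimpleGraph.Walk.exists_eq_cons_of_ne hne p
    have hu : (↑u : V) ∈ D.filter (fun z => T.Adj v z) :=
      Finset.mem_filter.2 ⟨Finset.mem_coe.1 u.2, ha⟩
    have heq : degIn T D v = (D.filter (fun z => T.Adj v z)).card :=
      degIn_eq_card (fun z => Finset.mem_filter)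
    rw [heq]
    exact Finset.card_pos.2 ⟨↑u, hu⟩
  have hb : (innerBoundary T D).card ≤ ∑ v ∈ innerBoundary T D, degIn T D v := by
    calc (innerBoundary T D).card = ∑ _v ∈ innerBoundary T D, 1 := by
          rw [Finset.sum_const, smul_eq_mul, mul_one]
      _ ≤ ∑ v ∈ innerBoundary T D, degIn T D v := Finset.sum_le_sum hone
  obtain ⟨e, rfl⟩ : ∃ e, d = e + 2 := ⟨d - 2, by omega⟩
  obtain ⟨m, hm⟩ : ∃ m, D.card = (innerBoundary T D).card + m := ⟨_, (Nat.add_sub_cancel' hble).symm⟩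
  have hnb : D.card - (innerBoundary T D).card = m := by omega
  rw [hnb] at hsum
  rw [hm] at hsum ⊢
  have e1 : e + 2 - 2 = e := by omega
  have e2 : e + 2 - 1 = e + 1 := by omega
  rw [e1, e2]
  nlinarith [hsum, hb]

lemma key_eq (hac : T.IsAcyclic) (hdeg : ∀ v, (T.neighborSet v).ncard = d) (hd : 2 ≤ d)
    {D : Finset V} (hD : IsGraphDomain T D)
    (h1 : ∀ v ∈ innerBoundary T D, degIn T D v = 1) :
    (d - 2) * D.card + 2 = (d - 1) * (innerBoundary T D).card := by
  classical
  obtain ⟨hsum, hble⟩ := sum_split hac hdeg hd hD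
  have hb : ∑ v ∈ innerBoundary T D, degIn T D v = (innerBoundary T D).card := by
    rw [Finset.sum_congr rfl h1, Finset.sum_const, smul_eq_mul, mul_one]
  rw [hb] at hsum
  obtain ⟨e, rfl⟩ : ∃ e, d = e + 2 := ⟨d - 2, by omega⟩
  obtain ⟨m, hm⟩ : ∃ m, D.card = (innerBoundary T D).card + m := ⟨_, (Nat.add_sub_cancel' hble).symm⟩
  have hnb : D.card - (innerBoundary T D).card = m := by omega
  rw [hnb] at hsum
  rw [hm] at hsum ⊢
  have e1 : e + 2 - 2 = e := by omega
  have e2 : e + 2 - 1 = e + 1 := by omega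
  rw [e1, e2]
  nlinarith [hsum]

end AuxTree




/-- Balls in the `d`-regular tree are domains with `|∂B(x,r)| = d(d−1)^{r−1}` and
`(d−2)|B(x,r)| + 2 = (d−1)|∂B(x,r)|`; consequently they are isoperimetrically optimal. -/
theorem stmt_7 {V : Type*} (d : ℕ) (hd : 2 ≤ d) (T : SimpleGraph V)
    (hT : IsRegularTree T d) (x : V) (r : ℕ) (hr : 1 ≤ r)
    (B : Finset V) (hB : ∀ y : V, y ∈ B ↔ T.dist x y ≤ r) :
    IsGraphDomain T B ∧
    (innerBoundary T B).card = d * (d - 1) ^ (r - 1) ∧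
    (d - 2) * B.card + 2 = (d - 1) * (innerBoundary T B).card ∧
    IsOptimal T B := by
  classical
  obtain ⟨hc, hac, hdeg⟩ := hT
  have hfin : ∀ v, (T.neighborSet v).Finite := by
    intro v
    by_contra hf
    have h0 := Set.Infinite.ncard hf
    have := hdeg v
    omega
  set N : V → Finset V := fun v => (hfin v).toFinset with hN
  have hNmem : ∀ v z, z ∈ N v ↔ T.Adj v z := fun v z => by
    simp [hN, Set.Finite.mem_toFinset, SimpleGraph.mem_neighborSet]
  have hNcard : ∀ v, (N v).card = d := fun v => by
    rw [hN, ← Set.ncard_eq_toFinset_card _ (hfin v)]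
    exact hdeg v
  have hxB : x ∈ B := (hB x).2 (by rw [SimpleGraph.dist_self]; omega)
  have hbd : ∀ y, y ∈ innerBoundary T B ↔ T.dist x y = r := by
    intro y
    rw [mem_innerBoundary_iff, hB]
    constructor
    · rintro ⟨hyr, z, hzB, hadj⟩
      have h1 := dist_adj_le hc x hadj
      have h2 : ¬ (T.dist x z ≤ r) := fun h => hzB ((hB z).2 h)
      omega
    · intro hyr
      refine ⟨by omega, ?_⟩
      have hy0 : T.dist x y ≠ 0 := by omega
      have hchild := filter_child_card hc hac x hy0 (hNmem y) (hNcard y)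
      have hpos : 0 < ((N y).filter (fun z => T.dist x z = T.dist x y + 1)).card := by omega
      obtain ⟨z, hz⟩ := Finset.card_pos.1 hpos
      obtain ⟨hzN, hzd⟩ := Finset.mem_filter.1 hz
      refine ⟨z, ?_, (hNmem y z).1 hzN⟩
      rw [hB]
      omega
  have hdom : IsGraphDomain T B := by
    refine ⟨⟨x, hxB⟩, ?_⟩
    have key : ∀ n, ∀ y, ∀ hy : y ∈ B, T.dist x y = n →
        (T.induce (↑B : Set V)).Reachable ⟨x, Finset.mem_coe.2 hxB⟩ ⟨y, Finset.mem_coe.2 hy⟩ := by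
      intro n
      induction n using Nat.strong_induction_on with
      | _ n ih =>
        intro y hy hdy
        rcases Nat.eq_zero_or_pos n with h0 | hpos
        · subst h0
          have hxy : x = y := hc.dist_eq_zero_iff.1 hdy
          subst hxy
          exact SimpleGraph.Reachable.refl _
        · have hy0 : T.dist x y ≠ 0 := by omega
          obtain ⟨z, hadj, hzd⟩ := exists_parent hc x hy0
          have hzB : z ∈ B := by
            rw [hB]
            have := (hB y).1 hy
            omega
          have hr1 := ih (n-1) (by omega) z hzB (by omega)
          have hadj' : (T.induce (↑B : Set V)).Adj ⟨z, Finset.mem_coe.2 hzB⟩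
              ⟨y, Finset.mem_coe.2 hy⟩ := by
            simp only [SimpleGraph.comap_adj, Function.Embedding.coe_subtype]
            exact hadj.symm
          exact hr1.trans hadj'.reachable
    haveI : Nonempty (↑B : Set V) := ⟨⟨x, Finset.mem_coe.2 hxB⟩⟩
    refine ⟨fun a b => ?_⟩
    obtain ⟨a, ha⟩ := a
    obtain ⟨b, hb⟩ := b
    exact (key _ a (Finset.mem_coe.1 ha) rfl).symm.trans (key _ b (Finset.mem_coe.1 hb) rfl)
  set S : ℕ → Finset V := fun k => B.filter (fun y => T.dist x y = k) with hS
  have hSmem : ∀ k, k ≤ r → ∀ y, (y ∈ S k ↔ T.dist x y = k) := by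
    intro k hk y
    simp only [hS, Finset.mem_filter, hB]
    exact ⟨fun h => h.2, fun h => ⟨by omega, h⟩⟩
  have hS1 : (S 1).card = d := by
    have h : S 1 = N x := by
      ext z
      rw [hSmem 1 hr z, hNmem, ← SimpleGraph.dist_eq_one_iff_adj]
    rw [h, hNcard]
  have hstep : ∀ k, 1 ≤ k → k + 1 ≤ r → (S (k+1)).card = (d - 1) * (S k).card := by
    intro k hk1 hkr
    have hpa : ∀ y : V, ∃ z, T.dist x y ≠ 0 → (T.Adj y z ∧ T.dist x z + 1 = T.dist x y) := by
      intro y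
      by_cases h : T.dist x y ≠ 0
      · obtain ⟨z, hz⟩ := exists_parent hc x h
        exact ⟨z, fun _ => hz⟩
      · exact ⟨y, fun h' => (h h').elim⟩
    choose pa hpa2 using hpa
    have hmap : ∀ y ∈ S (k+1), pa y ∈ S k := by
      intro y hy
      have hdy := (hSmem (k+1) hkr y).1 hy
      have h := hpa2 y (by omega)
      exact (hSmem k (by omega) _).2 (by omega)
    rw [Finset.card_eq_sum_card_fiberwise hmap]
    have hfib : ∀ z ∈ S k, ((S (k+1)).filter (fun y => pa y = z)).card = d - 1 := by
      intro z hz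
      have hdz := (hSmem k (by omega) z).1 hz
      have hz0 : T.dist x z ≠ 0 := by omega
      have hset : (S (k+1)).filter (fun y => pa y = z)
          = (N z).filter (fun w => T.dist x w = T.dist x z + 1) := by
        ext y
        simp only [Finset.mem_filter, hSmem (k+1) hkr, hNmem]
        constructor
        · rintro ⟨hdy, rfl⟩
          have h := hpa2 y (by omega)
          exact ⟨h.1.symm, by omega⟩
        · rintro ⟨hadj, hdy⟩
          have hdy' : T.dist x y = k + 1 := by omega
          have h := hpa2 y (by omega)
          exact ⟨hdy', parent_unique hc hac x h.1 hadj.symm (by omega) (by omega)⟩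
      rw [hset, filter_child_card hc hac x hz0 (hNmem z) (hNcard z)]
    rw [Finset.sum_congr rfl hfib, Finset.sum_const, smul_eq_mul, mul_comm]
  have hSr : ∀ k, 1 ≤ k → k ≤ r → (S k).card = d * (d-1)^(k-1) := by
    intro k
    induction k with
    | zero => omega
    | succ n ih =>
      intro h1 hkr
      rcases Nat.eq_zero_or_pos n with h0 | hn
      · subst h0
        simpa using hS1
      · rw [hstep n (by omega) (by omega), ih (by omega) (by omega)]
        have hn1 : n + 1 - 1 = (n - 1) + 1 := by omega
        rw [hn1, pow_succ]
        ring
  have hbdS : innerBoundary T B = S r := by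
    ext y
    rw [hbd y, hSmem r le_rfl y]
  have part2 : (innerBoundary T B).card = d * (d - 1) ^ (r - 1) := by
    rw [hbdS]
    exact hSr r hr le_rfl
  have hdeg1 : ∀ v ∈ innerBoundary T B, degIn T B v = 1 := by
    intro v hv
    have hdv : T.dist x v = r := (hbd v).1 hv
    have hv0 : T.dist x v ≠ 0 := by omega
    obtain ⟨z₀, hz₀, hz₀d⟩ := exists_parent hc x hv0
    have hsng : B.filter (fun z => T.Adj v z) = {z₀} := by
      ext z
      simp only [Finset.mem_filter, Finset.mem_singleton, hB]
      constructor
      · rintro ⟨hzr, hadj⟩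
        have hne := adj_dist_ne hc hac x hadj
        have hle1 := dist_adj_le hc x hadj
        have hle2 := dist_adj_le hc x hadj.symm
        exact parent_unique hc hac x hadj hz₀ (by omega) hz₀d
      · rintro rfl
        exact ⟨by omega, hz₀⟩
    rw [degIn_eq_card (fun z => Finset.mem_filter), hsng, Finset.card_singleton]
  have part3 : (d - 2) * B.card + 2 = (d - 1) * (innerBoundary T B).card :=
    key_eq hac hdeg hd hdom hdeg1
  have hB2 : 2 ≤ B.card := by
    have hdpos : 0 < (N x).card := by
      rw [hNcard]
      omega
    obtain ⟨y, hy⟩ := Finset.card_pos.1 hdpos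
    have hadj := (hNmem x y).1 hy
    have hyB : y ∈ B := by
      rw [hB, SimpleGraph.dist_eq_one_iff_adj.2 hadj]
      omega
    exact Finset.one_lt_card.2 ⟨x, hxB, y, hyB, hadj.ne⟩
  refine ⟨hdom, part2, part3, ?_⟩
  intro D' hD' hcard
  have hD'2 : 2 ≤ D'.card := by omega
  have hle := key_le hac hdeg hd hD' hD'2
  rw [hcard] at hle
  have h2 : (d-1) * (innerBoundary T B).card ≤ (d-1) * (innerBoundary T D').card := by
    rw [← part3]
    exact hle
  exact Nat.le_of_mul_le_mul_left h2 (by omega)
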